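/- arXiv:2507.21508 — 2 statements merged into one kernel-verified Lean document; each statement's English description precedes it below -/
import Mathlib

section
/- Finite binomial expansion of ∏(1−ℓ_i)^{p−m} in complex zonal polynomials: let p ≥ m ≥ 1 and n ≥ 1 be integers. Then for all real numbers ℓ₁,…,ℓ_n, ∏_{i=1}^n (1−ℓ_i)^{p−m} = Σ_{t=0}^{n(p−m)} Σ_{τ ∈ P^t_n} ((m−p)_τ/t!)·C_τ(ℓ₁,…,ℓ_n), where C_τ(ℓ) = χ_τ·s_τ(ℓ₁,…,ℓ_n). -/
open scoped BigOperators Real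
open MeasureTheory

noncomputable section

/-- The set `P^k_n` of partitions of `k` with at most `n` parts, encoded as weakly
decreasing functions `Fin n → ℕ` summing to `k`. -/
def partitionsOf (n k : ℕ) : Finset (Fin n → ℕ) :=
  (Fintype.piFinset fun _ : Fin n => Finset.range (k + 1)).filter
    fun κ => (∀ i j : Fin n, i ≤ j → κ j ≤ κ i) ∧ ∑ i, κ i = k

/-- `χ_κ = k!·∏_{i<j}(κ_i−κ_j−i+j)/∏_i (κ_i+n−i)!` (0-indexed version). -/
def chi (n : ℕ) (κ : Fin n → ℕ) : ℝ :=
  (Nat.factorial (∑ i, κ i) : ℝ)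
    * (∏ i : Fin n, ∏ j : Fin n,
        if (i : ℕ) < (j : ℕ) then ((κ i : ℝ) - (κ j : ℝ) + (j : ℕ) - (i : ℕ)) else 1)
    / ∏ i : Fin n, (Nat.factorial (κ i + (n - 1 - (i : ℕ))) : ℝ)

/-- `S` is the family of Schur polynomials in `n` variables: for every partition `κ`
(with at most `n` parts), `det((x_i^{κ_j+n−j})) = S κ · ∏_{i<j}(x_i−x_j)`. -/
def IsSchur (n : ℕ) (S : (Fin n → ℕ) → MvPolynomial (Fin n) ℝ) : Prop :=
  ∀ κ : Fin n → ℕ, (∀ i j : Fin n, i ≤ j → κ j ≤ κ i) →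
    (Matrix.of fun i j : Fin n =>
        (MvPolynomial.X i : MvPolynomial (Fin n) ℝ) ^ (κ j + (n - 1 - (j : ℕ)))).det
      = S κ * ∏ i : Fin n, ∏ j : Fin n,
          if (i : ℕ) < (j : ℕ) then (MvPolynomial.X i - MvPolynomial.X j) else 1

/-- The one-row partition `(k, 0, …, 0)`. -/
def oneRow (n k : ℕ) : Fin n → ℕ := fun i => if (i : ℕ) = 0 then k else 0

/-- `δ/τ` is a horizontal strip: `δ_i ≥ τ_i ≥ δ_{i+1}` for all `i`. -/
def IsHStrip {n : ℕ} (τ δ : Fin n → ℕ) : Prop :=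
  (∀ i, τ i ≤ δ i) ∧ ∀ i j : Fin n, (i : ℕ) + 1 = (j : ℕ) → δ j ≤ τ i

instance {n : ℕ} (τ δ : Fin n → ℕ) : Decidable (IsHStrip τ δ) := by
  unfold IsHStrip; infer_instance

/-- The generalized (complex) Pochhammer symbol `(a)_κ = ∏_i (a−i+1)_{κ_i}` (0-indexed). -/
def pochP {n : ℕ} (a : ℝ) (κ : Fin n → ℕ) : ℝ :=
  ∏ i : Fin n, (ascPochhammer ℝ (κ i)).eval (a - (i : ℕ))

/-- The complex multivariate gamma function `Γ_n(a, κ)`. -/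
def cGammaP (n : ℕ) (a : ℝ) (κ : Fin n → ℕ) : ℝ :=
  Real.pi ^ (n * (n - 1) / 2) * ∏ i : Fin n, Real.Gamma (a + (κ i : ℝ) - (i : ℕ))

/-- `Γ_n(a) = Γ_n(a, 0)`. -/
def cGamma (n : ℕ) (a : ℝ) : ℝ := cGammaP n a fun _ => 0

/-- Pad a partition with at most `n` parts to one with at most `m` parts (`m ≥ n`). -/
def padP {n : ℕ} (m : ℕ) (κ : Fin n → ℕ) : Fin m → ℕ :=
  fun i => if h : (i : ℕ) < n then κ ⟨i, h⟩ else 0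


namespace BEZ

section
open Finset Nat Polynomial

lemma fact_prod_desc : ∀ {k e : ℕ}, k ≤ e → (e - k)! * ∏ s ∈ range k, (e - s) = e ! := by
  intro k
  induction k with
  | zero => intro e _; simp
  | succ k ih =>
    intro e h
    have hk : k ≤ e := Nat.le_of_succ_le h
    have h1 : e - k = (e - (k + 1)) + 1 := by omega
    rw [prod_range_succ, ← mul_assoc, mul_comm ((e - (k+1))!) _, mul_assoc, ← ih hk, h1,
      Nat.factorial_succ, ← h1]
    ring

lemma fact_prod_asc (d : ℕ) : ∀ (m : ℕ), d ! * ∏ s ∈ range m, (d + 1 + s) = (d + m)! := by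
  intro m
  induction m with
  | zero => simp
  | succ m ih =>
    rw [prod_range_succ, ← mul_assoc, ih, show d + (m+1) = (d + m) + 1 by omega,
      Nat.factorial_succ]
    ring

lemma entry_eq (d n : ℕ) {e : ℕ} (k : ℕ) (hk : k < n) (he : e ≤ d + n - 1) :
    ((e ! : ℕ) : ℝ) * (((d + n - 1 - e)! : ℕ) : ℝ) *
        (if k ≤ e then (d.choose (e - k) : ℝ) else 0)
      = (d ! : ℝ) * ((∏ s ∈ range k, ((e : ℝ) - s)) *
          ∏ s ∈ range (n - 1 - k), (((d + (k + 1 + s) : ℕ) : ℝ) - e)) := by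
  rcases lt_or_ge e k with hek | hek
  · rw [if_neg (by omega)]
    have : ∏ s ∈ range k, ((e : ℝ) - s) = 0 :=
      Finset.prod_eq_zero (Finset.mem_range.2 hek) (by simp)
    rw [this]
    ring
  · rw [if_pos hek]
    rcases le_or_gt e (d + k) with hed | hed
    · -- main case
      have hA : (((e - k)! : ℕ) : ℝ) * ∏ s ∈ range k, ((e : ℝ) - s) = (e ! : ℝ) := by
        have : ∏ s ∈ range k, ((e : ℝ) - s) = ((∏ s ∈ range k, (e - s) : ℕ) : ℝ) := by
          rw [Nat.cast_prod]
          refine Finset.prod_congr rfl fun s hs => ?_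
          have := Finset.mem_range.1 hs
          rw [Nat.cast_sub (by omega)]
        rw [this, ← Nat.cast_mul, fact_prod_desc hek]
      have hB : (((d + k - e)! : ℕ) : ℝ) *
          ∏ s ∈ range (n - 1 - k), (((d + (k + 1 + s) : ℕ) : ℝ) - e)
          = (((d + n - 1 - e)! : ℕ) : ℝ) := by
        have h1 : ∏ s ∈ range (n - 1 - k), (((d + (k + 1 + s) : ℕ) : ℝ) - e)
            = ((∏ s ∈ range (n - 1 - k), ((d + k - e) + 1 + s) : ℕ) : ℝ) := by
          rw [Nat.cast_prod]
          refine Finset.prod_congr rfl fun s hs => ?_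
          have h2 : (d + k - e) + 1 + s = (d + (k + 1 + s)) - e := by omega
          rw [h2, Nat.cast_sub (by omega)]
        rw [h1, ← Nat.cast_mul, fact_prod_asc, show d + k - e + (n - 1 - k) = d + n - 1 - e by omega]
      have hC : (d.choose (e - k) : ℝ) * (((e - k)! : ℕ) : ℝ) * (((d + k - e)! : ℕ) : ℝ)
          = (d ! : ℝ) := by
        have := Nat.choose_mul_factorial_mul_factorial (show e - k ≤ d by omega)
        rw [show d - (e - k) = d + k - e by omega] at this
        exact_mod_cast congrArg (Nat.cast : ℕ → ℝ) this
      have hne1 : (((e - k)! : ℕ) : ℝ) ≠ 0 := by positivity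
      have hne2 : (((d + k - e)! : ℕ) : ℝ) ≠ 0 := by positivity
      apply mul_left_cancel₀ hne1
      apply mul_left_cancel₀ hne2
      calc (((d+k-e)! : ℕ):ℝ) * ((((e-k)! : ℕ):ℝ) * (((e ! : ℕ):ℝ) * (((d + n - 1 - e)! : ℕ):ℝ)
            * (d.choose (e - k) : ℝ)))
          = ((((e-k)! : ℕ):ℝ) * ((((d+k-e)! : ℕ):ℝ)) * (d.choose (e - k) : ℝ)) * ((e ! : ℕ):ℝ)
            * (((d + n - 1 - e)! : ℕ):ℝ) := by ring
        _ = (d ! : ℝ) * ((e ! : ℕ):ℝ) * (((d + n - 1 - e)! : ℕ):ℝ) := by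
            rw [show (((e-k)! : ℕ):ℝ) * ((((d+k-e)! : ℕ)):ℝ) * (d.choose (e - k) : ℝ)
              = (d.choose (e - k) : ℝ) * (((e - k)! : ℕ) : ℝ) * (((d + k - e)! : ℕ) : ℝ) by ring, hC]
        _ = (((d+k-e)! : ℕ):ℝ) * ((((e-k)! : ℕ):ℝ) * ((d ! : ℝ) * ((∏ s ∈ range k, ((e : ℝ) - s)) *
              ∏ s ∈ range (n - 1 - k), (((d + (k + 1 + s) : ℕ) : ℝ) - e)))) := by
            rw [show (((d+k-e)! : ℕ):ℝ) * ((((e-k)! : ℕ):ℝ) * ((d ! : ℝ) * ((∏ s ∈ range k, ((e : ℝ) - s)) *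
              ∏ s ∈ range (n - 1 - k), (((d + (k + 1 + s) : ℕ) : ℝ) - e))))
              = (d ! :ℝ) * ((((e-k)! : ℕ):ℝ) * ∏ s ∈ range k, ((e : ℝ) - s)) *
                ((((d+k-e)! : ℕ):ℝ) * ∏ s ∈ range (n - 1 - k), (((d + (k + 1 + s) : ℕ) : ℝ) - e)) by ring,
              hA, hB]
    · -- e > d + k : both sides are zero
      rw [Nat.choose_eq_zero_of_lt (by omega)]
      have : ∏ s ∈ range (n - 1 - k), (((d + (k + 1 + s) : ℕ) : ℝ) - e) = 0 := by
        refine Finset.prod_eq_zero (Finset.mem_range.2 (show e - d - k - 1 < n - 1 - k by omega)) ?_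
        rw [show d + (k + 1 + (e - d - k - 1)) = e by omega]
        ring
      rw [this]
      ring


/-- The intermediate matrices in the column reduction. -/
def Hm (d n : ℕ) (b : Fin n → ℕ) (r : ℕ) : Matrix (Fin n) (Fin n) ℝ :=
  Matrix.of fun j k =>
    (∏ s ∈ range (min r (n - 1 - (k : ℕ))), ((d + 1 + s : ℕ) : ℝ)) *
      ((∏ s ∈ range (k : ℕ), ((b j : ℝ) - s)) *
        ∏ s ∈ range (n - 1 - (k : ℕ) - min r (n - 1 - (k : ℕ))),
          (((d + ((k : ℕ) + min r (n - 1 - (k : ℕ)) + 1 + s) : ℕ) : ℝ) - (b j : ℝ)))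

/-- The elementary column-operation matrix. -/
def Em (n r : ℕ) : Matrix (Fin n) (Fin n) ℝ :=
  1 + Matrix.of (fun k' k : Fin n => if (k' : ℕ) = (k : ℕ) + 1 ∧ (k : ℕ) + r + 2 ≤ n then 1 else 0)

lemma det_Em (n r : ℕ) : (Em n r).det = 1 := by
  rw [Em]
  have h : (1 + Matrix.of (fun k' k : Fin n =>
      if (k' : ℕ) = (k : ℕ) + 1 ∧ (k : ℕ) + r + 2 ≤ n then (1:ℝ) else 0)).BlockTriangular
      OrderDual.toDual := by
    intro i j hij
    have hij' : i < j := hij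
    simp only [Matrix.add_apply, Matrix.of_apply, Matrix.one_apply]
    rw [if_neg (by exact ne_of_lt hij'), if_neg (by
      rintro ⟨h1, -⟩
      have : (i:ℕ) < (j:ℕ) := hij'
      omega)]
    norm_num
  rw [Matrix.det_of_lowerTriangular _ h]
  refine Finset.prod_eq_one fun k _ => ?_
  simp [Matrix.one_apply]

lemma Hm_mul_Em (d n : ℕ) (b : Fin n → ℕ) (r : ℕ) :
    Hm d n b r * Em n r = Hm d n b (r + 1) := by
  ext j k
  rw [Matrix.mul_apply]
  have hsplit : ∀ k' : Fin n, Hm d n b r j k' * Em n r k' k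
      = (if k' = k then Hm d n b r j k' else 0)
        + (if (k' : ℕ) = (k : ℕ) + 1 ∧ (k : ℕ) + r + 2 ≤ n then Hm d n b r j k' else 0) := by
    intro k'
    rw [Em]
    simp only [Matrix.add_apply, Matrix.of_apply, Matrix.one_apply]
    rcases eq_or_ne k' k with h | h <;> rcases em ((k' : ℕ) = (k : ℕ) + 1 ∧ (k : ℕ) + r + 2 ≤ n) with h2 | h2 <;>
      simp [h, h2] <;> omega
  rw [Finset.sum_congr rfl fun k' _ => hsplit k', Finset.sum_add_distrib,
    Finset.sum_ite_eq' univ k _, if_pos (mem_univ k)]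
  by_cases hc : (k : ℕ) + r + 2 ≤ n
  · have hk1 : (k : ℕ) + 1 < n := by omega
    rw [Finset.sum_eq_single (⟨(k : ℕ) + 1, hk1⟩ : Fin n)]
    rotate_left
    · intro k' _ hne
      rw [if_neg]
      rintro ⟨h1, -⟩
      exact hne (Fin.ext h1)
    · intro h; exact absurd (mem_univ _) h
    rw [if_pos ⟨rfl, hc⟩]
    -- now the core algebraic identity
    simp only [Hm, Matrix.of_apply, Fin.val_mk]
    have hm1 : min r (n - 1 - (k : ℕ)) = r := by omega
    have hm2 : min (r + 1) (n - 1 - (k : ℕ)) = r + 1 := by omega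
    have hm3 : min r (n - 1 - ((k : ℕ) + 1)) = r := by omega
    rw [hm1, hm2, hm3]
    have hr1 : n - 1 - (k : ℕ) - r = (n - 1 - ((k : ℕ) + 1) - r) + 1 := by omega
    rw [hr1, prod_range_succ', prod_range_succ, prod_range_succ,
      show n - 1 - (k : ℕ) - (r + 1) = n - 1 - ((k : ℕ) + 1) - r by omega]
    have e1 : (∏ s ∈ range (n - 1 - ((k:ℕ)+1) - r),
          (((d + ((k:ℕ) + r + 1 + (s+1)) : ℕ) : ℝ) - (b j : ℝ)))
        = ∏ s ∈ range (n - 1 - ((k:ℕ)+1) - r),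
          (((d + ((k:ℕ) + 1 + r + 1 + s) : ℕ) : ℝ) - (b j : ℝ)) :=
      Finset.prod_congr rfl fun s _ => congrArg (fun t : ℕ => (t:ℝ) - (b j:ℝ)) (by omega)
    have e3 : (∏ s ∈ range (n - 1 - ((k:ℕ)+1) - r),
          (((d + ((k:ℕ) + (r+1) + 1 + s) : ℕ) : ℝ) - (b j : ℝ)))
        = ∏ s ∈ range (n - 1 - ((k:ℕ)+1) - r),
          (((d + ((k:ℕ) + 1 + r + 1 + s) : ℕ) : ℝ) - (b j : ℝ)) :=
      Finset.prod_congr rfl fun s _ => congrArg (fun t : ℕ => (t:ℝ) - (b j:ℝ)) (by omega)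
    rw [e1, e3]
    have hcast : ((d + ((k:ℕ) + r + 1 + 0) : ℕ) : ℝ) - (b j : ℝ) + ((b j : ℝ) - ((k:ℕ) : ℝ))
        = ((d + 1 + r : ℕ) : ℝ) := by push_cast; ring
    linear_combination ((∏ s ∈ range r, ((d + 1 + s : ℕ) : ℝ)) * (∏ s ∈ range (k:ℕ), ((b j : ℝ) - s)) *
      ∏ s ∈ range (n - 1 - ((k : ℕ) + 1) - r), (((d + ((k:ℕ) + 1 + r + 1 + s) : ℕ) : ℝ) - (b j : ℝ))) * hcast
  · rw [Finset.sum_eq_zero fun k' _ => by rw [if_neg (by tauto)], add_zero]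
    simp only [Hm, Matrix.of_apply]
    have hm : min r (n - 1 - (k : ℕ)) = n - 1 - (k : ℕ) := by omega
    have hm2 : min (r + 1) (n - 1 - (k : ℕ)) = n - 1 - (k : ℕ) := by omega
    rw [hm, hm2]

lemma det_Hm (d n : ℕ) (b : Fin n → ℕ) : ∀ r, (Hm d n b 0).det = (Hm d n b r).det := by
  intro r
  induction r with
  | zero => rfl
  | succ r ih => rw [ih, ← Hm_mul_Em d n b r, Matrix.det_mul, det_Em, mul_one]


lemma det_ladder (n : ℕ) (b : Fin n → ℕ) :
    (Matrix.of fun j k : Fin n => ∏ s ∈ range (k : ℕ), ((b j : ℝ) - s)).det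
      = ∏ i : Fin n, ∏ j ∈ Ioi i, ((b j : ℝ) - (b i : ℝ)) := by
  have h := Matrix.det_eval_matrixOfPolynomials_eq_det_vandermonde
    (fun j : Fin n => (b j : ℝ))
    (fun k : Fin n => ∏ s ∈ range (k : ℕ), (X - C (s : ℝ)))
    (fun k => by
      rw [Polynomial.natDegree_prod _ _ (fun s _ => X_sub_C_ne_zero _)]
      simp only [natDegree_X_sub_C, Finset.sum_const, Finset.card_range, smul_eq_mul, mul_one])
    (fun k => monic_prod_of_monic _ _ fun s _ => monic_X_sub_C _)
  have h2 : (Matrix.of fun j k : Fin n =>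
      Polynomial.eval ((b j : ℝ)) (∏ s ∈ range (k : ℕ), (X - C (s : ℝ))))
      = Matrix.of fun j k : Fin n => ∏ s ∈ range (k : ℕ), ((b j : ℝ) - s) := by
    ext j k
    simp [Polynomial.eval_prod]
  rw [h2] at h
  rw [← h, Matrix.det_vandermonde]

lemma detU (d n : ℕ) (b : Fin n → ℕ) (hb : ∀ j, b j ≤ d + n - 1) :
    (∏ j : Fin n, (((b j)! * (d + n - 1 - b j)! : ℕ) : ℝ)) *
      (Matrix.of fun j k : Fin n =>
        if (k : ℕ) ≤ b j then (d.choose (b j - (k : ℕ)) : ℝ) else 0).det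
    = (d ! : ℝ) ^ n * (∏ k : Fin n, ∏ s ∈ range (n - 1 - (k : ℕ)), ((d + 1 + s : ℕ) : ℝ)) *
      ∏ i : Fin n, ∏ j ∈ Ioi i, ((b j : ℝ) - (b i : ℝ)) := by
  have step1 : (Matrix.of fun j k : Fin n => (((b j)! * (d + n - 1 - b j)! : ℕ) : ℝ) *
      (if (k : ℕ) ≤ b j then (d.choose (b j - (k : ℕ)) : ℝ) else 0)).det
      = (∏ j : Fin n, (((b j)! * (d + n - 1 - b j)! : ℕ) : ℝ)) *
      (Matrix.of fun j k : Fin n =>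
        if (k : ℕ) ≤ b j then (d.choose (b j - (k : ℕ)) : ℝ) else 0).det :=
    Matrix.det_mul_column _ _
  rw [← step1]
  have step2 : (Matrix.of fun j k : Fin n => (((b j)! * (d + n - 1 - b j)! : ℕ) : ℝ) *
          (if (k : ℕ) ≤ b j then (d.choose (b j - (k : ℕ)) : ℝ) else 0))
      = Matrix.of fun j k : Fin n => (d ! : ℝ) * (Hm d n b 0 j k) := by
    ext j k
    have h := entry_eq d n (k : ℕ) k.isLt (hb j)
    simp only [Matrix.of_apply, Hm, Nat.zero_min, Nat.sub_zero, add_zero, prod_range_zero,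
      one_mul, Nat.cast_mul]
    rw [mul_assoc] at h ⊢
    rw [← h]
  rw [step2]
  have step3 : (Matrix.of fun j k : Fin n => (d ! : ℝ) * (Hm d n b 0 j k)).det
      = ((d ! : ℝ)) ^ n * (Hm d n b 0).det := by
    rw [show (Matrix.of fun j k : Fin n => (d ! : ℝ) * (Hm d n b 0 j k))
      = Matrix.of fun j k : Fin n => (fun _ : Fin n => (d ! : ℝ)) j * (Hm d n b 0 j k) from rfl,
      Matrix.det_mul_column]
    simp [Finset.prod_const]
  rw [step3, det_Hm d n b (n - 1)]
  have step5 : Hm d n b (n - 1)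
      = Matrix.of fun j k : Fin n =>
          (fun k : Fin n => ∏ s ∈ range (n - 1 - (k : ℕ)), ((d + 1 + s : ℕ) : ℝ)) k *
          (Matrix.of fun j k : Fin n => ∏ s ∈ range (k : ℕ), ((b j : ℝ) - s)) j k := by
    ext j k
    have hm : min (n - 1) (n - 1 - (k : ℕ)) = n - 1 - (k : ℕ) := by omega
    simp only [Matrix.of_apply, Hm, hm, Nat.sub_self, prod_range_zero, mul_one]
  rw [step5, Matrix.det_mul_row, det_ladder]
  ring


end

section
open Finset Nat

def wCoef (d e q : ℕ) : ℝ :=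
  if q ≤ e then (-1 : ℝ) ^ (e - q) * (d.choose (e - q) : ℝ) else 0

lemma wCoef_split (d e q : ℕ) :
    wCoef d e q = ((-1 : ℝ) ^ e * (-1 : ℝ) ^ q) *
      (if q ≤ e then (d.choose (e - q) : ℝ) else 0) := by
  by_cases h : q ≤ e
  · have h1 : (-1 : ℝ) ^ (e - q) = (-1 : ℝ) ^ (e + q) := by
      rw [show e + q = (e - q) + 2 * q by omega, pow_add, pow_mul]
      norm_num
    simp only [wCoef, if_pos h, h1, pow_add]
  · simp [wCoef, h]

lemma prod_Ioi_rev {M : Type*} [CommMonoid M] {n : ℕ} (f : Fin n → Fin n → M) :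
    ∏ i, ∏ j ∈ Ioi i, f i j = ∏ i, ∏ j ∈ Ioi i, f (Fin.rev j) (Fin.rev i) := by
  rw [Finset.prod_sigma', Finset.prod_sigma']
  refine Finset.prod_nbij' (fun p => ⟨Fin.rev p.2, Fin.rev p.1⟩)
    (fun p => ⟨Fin.rev p.2, Fin.rev p.1⟩) ?_ ?_ ?_ ?_ ?_
  · rintro ⟨x, y⟩ h
    simp only [Finset.mem_sigma, Finset.mem_univ, Finset.mem_Ioi, true_and] at h ⊢
    exact Fin.rev_lt_rev.mpr h
  · rintro ⟨x, y⟩ h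
    simp only [Finset.mem_sigma, Finset.mem_univ, Finset.mem_Ioi, true_and] at h ⊢
    exact Fin.rev_lt_rev.mpr h
  · rintro ⟨x, y⟩ _
    simp [Fin.rev_rev]
  · rintro ⟨x, y⟩ _
    simp [Fin.rev_rev]
  · rintro ⟨x, y⟩ _
    simp [Fin.rev_rev]

lemma prod_if_Ioi {M : Type*} [CommMonoid M] {n : ℕ} (f : Fin n → Fin n → M) :
    (∏ i : Fin n, ∏ j : Fin n, if (i : ℕ) < (j : ℕ) then f i j else 1)
      = ∏ i, ∏ j ∈ Ioi i, f i j := by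
  refine Finset.prod_congr rfl fun i _ => ?_
  rw [← Finset.prod_filter]
  congr 1
  ext j
  simp only [Finset.mem_filter, Finset.mem_univ, true_and, Finset.mem_Ioi, Fin.lt_def]

lemma asc_eval (k : ℕ) (x : ℝ) :
    (ascPochhammer ℝ k).eval x = ∏ r ∈ range k, (x + r) := by
  induction k with
  | zero => simp
  | succ k ih => rw [ascPochhammer_succ_eval, ih, prod_range_succ]

lemma det_w (d n : ℕ) (τ : Fin n → ℕ)
    (hd : ∀ i, τ i ≤ d) :
    (Matrix.of fun j k : Fin n =>
        wCoef d (τ j + (n - 1 - (j : ℕ))) (n - 1 - (k : ℕ))).det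
    = pochP (-(d : ℝ)) τ *
        (∏ i : Fin n, ∏ j : Fin n,
          if (i : ℕ) < (j : ℕ) then ((τ i : ℝ) - (τ j : ℝ) + (j : ℕ) - (i : ℕ)) else 1) /
        ∏ i : Fin n, ((τ i + (n - 1 - (i : ℕ))).factorial : ℝ) := by
  have hin : ∀ i : Fin n, (i : ℕ) < n := fun i => i.isLt
  set a : Fin n → ℕ := fun i => τ i + (n - 1 - (i : ℕ)) with ha
  set b : Fin n → ℕ := fun j => a (Fin.rev j) with hbdef
  have hb : ∀ j, b j ≤ d + n - 1 := by
    intro j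
    have h1 := hd (Fin.rev j)
    have h2 := (Fin.rev j).isLt
    simp only [hbdef, ha]
    omega
  have hrevval : ∀ k : Fin n, ((Fin.rev k : Fin n) : ℕ) = n - 1 - (k : ℕ) := by
    intro k
    rw [Fin.val_rev]
    omega
  -- step 1 : reverse rows and columns
  rw [← Matrix.det_submatrix_equiv_self Fin.revPerm]
  -- step 2 : identify entries, extracting signs
  set Umat : Matrix (Fin n) (Fin n) ℝ := Matrix.of fun j k : Fin n =>
      if (k : ℕ) ≤ b j then (d.choose (b j - (k : ℕ)) : ℝ) else 0 with hU
  have hentry : (Matrix.of fun j k : Fin n =>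
        wCoef d (τ j + (n - 1 - (j : ℕ))) (n - 1 - (k : ℕ))).submatrix Fin.revPerm Fin.revPerm
      = Matrix.of fun j k : Fin n => ((-1 : ℝ) ^ (b j)) *
          ((Matrix.of fun j' k' : Fin n => ((-1 : ℝ) ^ (k' : ℕ)) * Umat j' k') j k) := by
    ext j k
    simp only [Matrix.submatrix_apply, Matrix.of_apply, Fin.revPerm_apply, hU]
    have h1 : n - 1 - ((Fin.rev k : Fin n) : ℕ) = (k : ℕ) := by rw [hrevval]; omega
    rw [h1, wCoef_split]
    simp only [hbdef, ha]
    ring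
  rw [hentry, Matrix.det_mul_column, Matrix.det_mul_row]
  -- step 3 : the signs
  have hsign : (∏ j : Fin n, (-1 : ℝ) ^ (b j)) * (∏ k : Fin n, (-1 : ℝ) ^ (k : ℕ))
      = (-1 : ℝ) ^ (∑ i, τ i) := by
    rw [Finset.prod_pow_eq_pow_sum, Finset.prod_pow_eq_pow_sum, ← pow_add]
    have h1 : ∑ j, b j = ∑ i, a i := Equiv.sum_comp Fin.revPerm a
    have h2 : ∑ i : Fin n, (n - 1 - (i : ℕ)) = ∑ i : Fin n, (i : ℕ) := by
      rw [show (fun i : Fin n => n - 1 - (i : ℕ)) = fun i : Fin n => ((Fin.rev i : Fin n) : ℕ) from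
        funext fun i => (hrevval i).symm]
      exact Equiv.sum_comp Fin.revPerm Fin.val
    have h3 : ∑ i, a i = ∑ i, τ i + ∑ i : Fin n, (n - 1 - (i : ℕ)) := by
      rw [ha, ← Finset.sum_add_distrib]
    rw [show ∑ j, b j + ∑ k : Fin n, (k : ℕ)
        = ∑ i, τ i + 2 * ∑ k : Fin n, (k : ℕ) by omega]
    rw [pow_add, pow_mul]
    norm_num
  -- R1 : pochhammer as signed product
  have R1 : pochP (-(d : ℝ)) τ
      = (-1 : ℝ) ^ (∑ i, τ i) * ∏ i : Fin n, ∏ r ∈ range (τ i), ((d : ℝ) + (i : ℕ) - r) := by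
    rw [pochP, ← Finset.prod_pow_eq_pow_sum, ← Finset.prod_mul_distrib]
    refine Finset.prod_congr rfl fun i _ => ?_
    rw [asc_eval]
    calc ∏ r ∈ range (τ i), (-(d:ℝ) - (i:ℕ) + r)
        = ∏ r ∈ range (τ i), (-1 : ℝ) * ((d:ℝ) + (i:ℕ) - r) :=
          Finset.prod_congr rfl fun r _ => by ring
      _ = (-1:ℝ)^(τ i) * ∏ r ∈ range (τ i), ((d:ℝ) + (i:ℕ) - r) := by
          rw [Finset.prod_mul_distrib, Finset.prod_const, Finset.card_range]
  -- R2
  have R2 : (∏ i : Fin n, ∏ r ∈ range (τ i), ((d : ℝ) + (i : ℕ) - r)) *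
      (∏ i : Fin n, (((d + (i : ℕ) - τ i)! : ℕ) : ℝ)) = ∏ i : Fin n, (((d + (i : ℕ))! : ℕ) : ℝ) := by
    rw [← Finset.prod_mul_distrib]
    refine Finset.prod_congr rfl fun i _ => ?_
    have hτ := hd i
    have h1 : ∏ r ∈ range (τ i), ((d : ℝ) + (i : ℕ) - r)
        = ((∏ r ∈ range (τ i), (d + (i:ℕ) - r) : ℕ) : ℝ) := by
      rw [Nat.cast_prod]
      refine Finset.prod_congr rfl fun r hr => ?_
      have := Finset.mem_range.1 hr
      rw [Nat.cast_sub (by omega)]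
      push_cast
      ring
    rw [h1, ← Nat.cast_mul, mul_comm, fact_prod_desc (show τ i ≤ d + (i:ℕ) by omega)]
  -- R34
  have R34 : (∏ j : Fin n, (((b j)! * (d + n - 1 - b j)! : ℕ) : ℝ))
      = (∏ i : Fin n, (((τ i + (n - 1 - (i : ℕ)))! : ℕ) : ℝ)) *
        ∏ i : Fin n, (((d + (i : ℕ) - τ i)! : ℕ) : ℝ) := by
    have h0 : (∏ j : Fin n, (((b j)! * (d + n - 1 - b j)! : ℕ) : ℝ))
        = ∏ j : Fin n, (((b j)! : ℕ) :ℝ) * (((d + n - 1 - b j)! : ℕ) : ℝ) :=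
      Finset.prod_congr rfl fun j _ => by push_cast; ring
    rw [h0, Finset.prod_mul_distrib]
    congr 1
    · calc ∏ j : Fin n, (((b j)! : ℕ) : ℝ)
          = ∏ j : Fin n, ((fun i : Fin n => (((a i)! : ℕ) : ℝ)) (Fin.revPerm j)) := by
            refine Finset.prod_congr rfl fun j _ => by simp only [hbdef]; rfl
        _ = ∏ i : Fin n, (((a i)! : ℕ) : ℝ) := Equiv.prod_comp Fin.revPerm (fun i : Fin n => (((a i)! : ℕ) : ℝ))
        _ = _ := Finset.prod_congr rfl fun i _ => by simp only [ha]
    · calc ∏ j : Fin n, (((d + n - 1 - b j)! : ℕ) : ℝ)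
          = ∏ j : Fin n, ((fun i : Fin n => (((d + n - 1 - a i)! : ℕ) : ℝ)) (Fin.revPerm j)) := by
            refine Finset.prod_congr rfl fun j _ => by simp only [hbdef]; rfl
        _ = ∏ i : Fin n, (((d + n - 1 - a i)! : ℕ) : ℝ) := Equiv.prod_comp Fin.revPerm (fun i : Fin n => (((d + n - 1 - a i)! : ℕ) : ℝ))
        _ = _ := by
            refine Finset.prod_congr rfl fun i _ => ?_
            have h1 := hd i
            have h2 := hin i
            congr 2
            simp only [ha]
            omega
  -- R5
  have R5 : (d ! : ℝ)^n * (∏ k : Fin n, ∏ s ∈ range (n - 1 - (k : ℕ)), ((d + 1 + s : ℕ) : ℝ))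
      = ∏ i : Fin n, (((d + (i : ℕ))! : ℕ) : ℝ) := by
    have h0 : (d ! : ℝ)^n = ∏ _k : Fin n, (d ! : ℝ) := by
      rw [Finset.prod_const, Finset.card_univ, Fintype.card_fin]
    rw [h0, ← Finset.prod_mul_distrib]
    calc ∏ k : Fin n, ((d ! : ℝ) * ∏ s ∈ range (n - 1 - (k : ℕ)), ((d + 1 + s : ℕ) : ℝ))
        = ∏ k : Fin n, ((fun i : Fin n => (((d + (i:ℕ))! : ℕ) : ℝ)) (Fin.revPerm k)) := by
          refine Finset.prod_congr rfl fun k _ => ?_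
          show (d ! : ℝ) * (∏ s ∈ range (n - 1 - (k : ℕ)), ((d + 1 + s : ℕ) : ℝ))
            = (((d + ((Fin.rev k : Fin n) : ℕ))! : ℕ) : ℝ)
          rw [hrevval k, ← fact_prod_asc d (n - 1 - (k:ℕ))]
          push_cast
          ring
      _ = _ := Equiv.prod_comp Fin.revPerm (fun i : Fin n => (((d + (i:ℕ))! : ℕ) : ℝ))
  -- R6
  have hbcast : ∀ i : Fin n, ((b i : ℕ) : ℝ)
      = (τ (Fin.rev i) : ℝ) + ((n - 1 : ℕ) : ℝ) - ((Fin.rev i : Fin n) : ℕ) := by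
    intro i
    have h2 := (Fin.rev i).isLt
    simp only [hbdef, ha]
    rw [Nat.cast_add, Nat.cast_sub (by omega : ((Fin.rev i : Fin n) : ℕ) ≤ n - 1)]
    ring
  have R6 : (∏ i : Fin n, ∏ j : Fin n,
        if (i:ℕ) < (j:ℕ) then ((τ i : ℝ) - (τ j : ℝ) + ((j:ℕ) : ℝ) - ((i:ℕ) : ℝ)) else 1)
      = ∏ i : Fin n, ∏ j ∈ Ioi i, ((b j : ℝ) - (b i : ℝ)) := by
    rw [prod_if_Ioi, prod_Ioi_rev
      (fun i j => ((τ i : ℝ) - (τ j : ℝ) + ((j:ℕ) : ℝ) - ((i:ℕ) : ℝ)))]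
    refine Finset.prod_congr rfl fun i _ => Finset.prod_congr rfl fun j _ => ?_
    rw [hbcast i, hbcast j]
    ring
  -- final assembly
  have hdetU := detU d n b hb
  rw [R5, ← R6] at hdetU
  have hFa : (∏ i : Fin n, (((τ i + (n - 1 - (i : ℕ)))! : ℕ) : ℝ)) ≠ 0 := by positivity
  have hP2 : (∏ i : Fin n, (((d + (i : ℕ) - τ i)! : ℕ) : ℝ)) ≠ 0 := by positivity
  rw [R1, ← mul_assoc, hsign, eq_div_iff hFa]
  refine mul_right_cancel₀ hP2 ?_
  calc ((-1:ℝ) ^ (∑ i, τ i) * Umat.det * ∏ i : Fin n, (((τ i + (n - 1 - (i : ℕ)))! : ℕ) : ℝ)) *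
        ∏ i : Fin n, (((d + (i : ℕ) - τ i)! : ℕ) : ℝ)
      = (-1:ℝ) ^ (∑ i, τ i) * (((∏ i : Fin n, (((τ i + (n - 1 - (i : ℕ)))! : ℕ) : ℝ)) *
          ∏ i : Fin n, (((d + (i : ℕ) - τ i)! : ℕ) : ℝ)) * Umat.det) := by ring
    _ = (-1:ℝ) ^ (∑ i, τ i) * ((∏ j : Fin n, (((b j)! * (d + n - 1 - b j)! : ℕ) : ℝ)) * Umat.det) := by
        rw [← R34]
    _ = (-1:ℝ) ^ (∑ i, τ i) * ((∏ i : Fin n, (((d + (i : ℕ))! : ℕ) : ℝ)) *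
          (∏ i : Fin n, ∏ j : Fin n,
            if (i:ℕ) < (j:ℕ) then ((τ i : ℝ) - (τ j : ℝ) + ((j:ℕ) : ℝ) - ((i:ℕ) : ℝ)) else 1)) := by
        rw [hdetU]
    _ = (-1:ℝ) ^ (∑ i, τ i) * (((∏ i : Fin n, ∏ r ∈ range (τ i), ((d : ℝ) + (i : ℕ) - r)) *
          ∏ i : Fin n, (((d + (i : ℕ) - τ i)! : ℕ) : ℝ)) *
          (∏ i : Fin n, ∏ j : Fin n,
            if (i:ℕ) < (j:ℕ) then ((τ i : ℝ) - (τ j : ℝ) + ((j:ℕ) : ℝ) - ((i:ℕ) : ℝ)) else 1)) := by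
        rw [R2]
    _ = ((-1:ℝ) ^ (∑ i, τ i) * (∏ i : Fin n, ∏ r ∈ range (τ i), ((d : ℝ) + (i : ℕ) - r)) *
          (∏ i : Fin n, ∏ j : Fin n,
            if (i:ℕ) < (j:ℕ) then ((τ i : ℝ) - (τ j : ℝ) + ((j:ℕ) : ℝ) - ((i:ℕ) : ℝ)) else 1)) *
          ∏ i : Fin n, (((d + (i : ℕ) - τ i)! : ℕ) : ℝ) := by ring


end

section
open Finset Nat

/-- reversed Vandermonde determinant in product form. -/
lemma detN {R : Type*} [CommRing R] {n : ℕ} (v : Fin n → R) :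
    (Matrix.of fun i j : Fin n => v i ^ (n - 1 - (j : ℕ))).det
      = ∏ i : Fin n, ∏ j : Fin n, if (i : ℕ) < (j : ℕ) then v i - v j else 1 := by
  rw [← Matrix.det_submatrix_equiv_self Fin.revPerm]
  have h : (Matrix.of fun i j : Fin n => v i ^ (n - 1 - (j : ℕ))).submatrix
        Fin.revPerm Fin.revPerm
      = Matrix.vandermonde (fun i => v (Fin.rev i)) := by
    ext i j
    simp only [Matrix.submatrix_apply, Matrix.of_apply, Fin.revPerm_apply,
      Matrix.vandermonde_apply]
    congr 1
    rw [Fin.val_rev]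
    omega
  rw [h, Matrix.det_vandermonde, prod_if_Ioi (fun i j => v i - v j),
    prod_Ioi_rev (fun i j => v i - v j)]

lemma expand_pow {R : Type*} [CommRing R] (cf : ℝ →+* R) (x : R) (d n q : ℕ) (hq : q < n) :
    (1 - x) ^ d * x ^ q = ∑ e ∈ range (n + d), cf (wCoef d e q) * x ^ e := by
  have hsub : Finset.Ico q (q + d + 1) ⊆ range (n + d) := by
    intro e he
    rw [Finset.mem_Ico] at he
    rw [Finset.mem_range]
    omega
  rw [← Finset.sum_subset hsub (fun e _ he2 => ?_)]
  · rw [Finset.sum_Ico_eq_sum_range]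
    rw [show q + d + 1 - q = d + 1 by omega]
    have h1 : (1 - x) ^ d = ∑ k ∈ range (d + 1), (-1) ^ k * x ^ k * (d.choose k : R) := by
      rw [sub_eq_add_neg, add_comm, add_pow]
      refine Finset.sum_congr rfl fun k _ => ?_
      rw [neg_pow]
      ring
    rw [h1, Finset.sum_mul]
    refine Finset.sum_congr rfl fun k hk => ?_
    rw [wCoef, if_pos (Nat.le_add_right q k), show q + k - q = k by omega]
    rw [map_mul, map_pow, map_neg, map_one, map_natCast]
    rw [pow_add]
    ring
  · -- vanishing terms
    rw [Finset.mem_Ico, not_and_or] at he2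
    have : wCoef d e q = 0 := by
      rcases he2 with h | h
      · rw [wCoef, if_neg (by omega)]
      · rw [wCoef]
        by_cases hqe : q ≤ e
        · rw [if_pos hqe, Nat.choose_eq_zero_of_lt (by omega)]
          simp
        · rw [if_neg hqe]
    rw [this, map_zero, zero_mul]


end

section
open Finset Nat MvPolynomial Matrix

lemma key_expand (d n : ℕ) (hn : 0 < n) :
    ((∏ i : Fin n, (1 - (X i : MvPolynomial (Fin n) ℝ)) ^ d) *
        ∏ i : Fin n, ∏ j : Fin n,
          if (i : ℕ) < (j : ℕ) then (X i - X j : MvPolynomial (Fin n) ℝ) else 1)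
      = ∑ r ∈ Fintype.piFinset (fun _ : Fin n => range (n + d)),
          (MvPolynomial.C (∏ j : Fin n, wCoef d (r j) (n - 1 - (j : ℕ))) : MvPolynomial (Fin n) ℝ) *
            (Matrix.of fun j i : Fin n => (X i : MvPolynomial (Fin n) ℝ) ^ (r j)).det := by
  have hM : (Matrix.of fun j i : Fin n =>
      (1 - (X i : MvPolynomial (Fin n) ℝ)) ^ d * X i ^ (n - 1 - (j : ℕ))).det
      = ((∏ i : Fin n, (1 - (X i : MvPolynomial (Fin n) ℝ)) ^ d) *
        ∏ i : Fin n, ∏ j : Fin n,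
          if (i : ℕ) < (j : ℕ) then (X i - X j : MvPolynomial (Fin n) ℝ) else 1) := by
    rw [← Matrix.det_transpose]
    have h2 : (Matrix.of fun j i : Fin n =>
        (1 - (X i : MvPolynomial (Fin n) ℝ)) ^ d * X i ^ (n - 1 - (j : ℕ)))ᵀ
        = Matrix.of fun i j : Fin n => (fun i : Fin n => (1 - (X i : MvPolynomial (Fin n) ℝ)) ^ d) i *
            (Matrix.of fun i j : Fin n => (X i : MvPolynomial (Fin n) ℝ) ^ (n - 1 - (j : ℕ))) i j := by
      ext i j
      rfl
    rw [h2, Matrix.det_mul_column, detN]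
  rw [← hM]
  have hdet : ∀ N : Matrix (Fin n) (Fin n) (MvPolynomial (Fin n) ℝ),
      N.det = Matrix.detRowAlternating.toMultilinearMap N := fun _ => rfl
  have harg : (Matrix.of fun j i : Fin n =>
      (1 - (X i : MvPolynomial (Fin n) ℝ)) ^ d * X i ^ (n - 1 - (j : ℕ)))
      = (fun j : Fin n => ∑ e ∈ range (n + d),
          (fun i : Fin n => (C (wCoef d e (n - 1 - (j : ℕ))) : MvPolynomial (Fin n) ℝ) * X i ^ e) :
          Matrix (Fin n) (Fin n) (MvPolynomial (Fin n) ℝ)) := by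
    funext j i
    simp only [Matrix.of_apply, Finset.sum_apply]
    exact expand_pow MvPolynomial.C (X i) d n _ (by omega)
  rw [hdet, harg, MultilinearMap.map_sum_finset]
  refine Finset.sum_congr rfl fun r _ => ?_
  have hsm : (fun j : Fin n => fun i : Fin n =>
        (C (wCoef d (r j) (n - 1 - (j : ℕ))) : MvPolynomial (Fin n) ℝ) * X i ^ (r j))
      = fun j : Fin n => (C (wCoef d (r j) (n - 1 - (j : ℕ))) : MvPolynomial (Fin n) ℝ) •
          (Matrix.of fun j i : Fin n => (X i : MvPolynomial (Fin n) ℝ) ^ (r j)) j := by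
    funext j i
    simp [smul_eq_mul]
  rw [hsm]
  exact (MultilinearMap.map_smul_univ _ (fun j => (C (wCoef d (r j) (n - 1 - (j : ℕ))) : MvPolynomial (Fin n) ℝ))
    (Matrix.of fun j i : Fin n => (X i : MvPolynomial (Fin n) ℝ) ^ (r j))).trans
    (by rw [smul_eq_mul, ← map_prod]; rfl)

end

section
open Finset Nat

lemma smono_gap {n : ℕ} {g : Fin n → ℕ} (hg : StrictMono g) :
    ∀ i j : Fin n, (i : ℕ) ≤ (j : ℕ) → g i + ((j : ℕ) - (i : ℕ)) ≤ g j := by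
  suffices h : ∀ m, ∀ i j : Fin n, (j : ℕ) = (i : ℕ) + m → g i + m ≤ g j by
    intro i j hij
    have := h ((j : ℕ) - (i : ℕ)) i j (by omega)
    omega
  intro m
  induction m with
  | zero =>
    intro i j hij
    have : i = j := Fin.ext (by omega)
    subst this
    omega
  | succ m ih =>
    intro i j hij
    have hj : (i : ℕ) + m < n := by have := j.isLt; omega
    have h1 := ih i ⟨(i : ℕ) + m, hj⟩ rfl
    have h2 : g ⟨(i : ℕ) + m, hj⟩ < g j := by
      apply hg
      rw [Fin.lt_def]
      simp only [Fin.val_mk]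
      omega
    omega

lemma smono_bounds {n d : ℕ} {g : Fin n → ℕ} (hg : StrictMono g) (hub : ∀ j, g j < n + d) :
    ∀ k : Fin n, (k : ℕ) ≤ g k ∧ g k ≤ d + (k : ℕ) := by
  intro k
  have hn : 0 < n := k.pos
  have h1 := smono_gap hg ⟨0, hn⟩ k (by simp)
  have h2 := smono_gap hg k ⟨n - 1, by omega⟩ (by simp only [Fin.val_mk]; omega)
  have h3 := hub (⟨n - 1, by omega⟩ : Fin n)
  have hk := k.isLt
  simp only [Fin.val_mk] at h1 h2
  omega

lemma group_sum {M : Type*} [AddCommMonoid M] (d n : ℕ)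
    (F : (Fin n → ℕ) → M)
    (hF0 : ∀ r : Fin n → ℕ, ¬Function.Injective r → F r = 0) :
    ∑ r ∈ Fintype.piFinset (fun _ : Fin n => range (n + d)), F r
      = ∑ τ ∈ (Fintype.piFinset fun _ : Fin n => range (d + 1)).filter
            (fun τ => ∀ i j : Fin n, i ≤ j → τ j ≤ τ i),
          ∑ σ : Equiv.Perm (Fin n),
            F (fun j => τ (σ j) + (n - 1 - ((σ j : Fin n) : ℕ))) := by
  classical
  have hrevval : ∀ k : Fin n, ((Fin.rev k : Fin n) : ℕ) = n - 1 - (k : ℕ) := by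
    intro k
    rw [Fin.val_rev]
    have := k.isLt
    omega
  -- notation
  set S : Finset (Fin n → ℕ) :=
    (Fintype.piFinset (fun _ : Fin n => range (n + d))).filter (fun r => Function.Injective r)
    with hSdef
  set T : Finset (Fin n → ℕ) :=
    (Fintype.piFinset fun _ : Fin n => range (d + 1)).filter
      (fun τ => ∀ i j : Fin n, i ≤ j → τ j ≤ τ i) with hTdef
  -- basic facts about members of S
  have hSfacts : ∀ r ∈ S, StrictMono (r ∘ ⇑(Tuple.sort r)) ∧ Function.Injective r ∧
      ∀ j, (r ∘ ⇑(Tuple.sort r)) j < n + d := by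
    intro r hr
    rw [hSdef, Finset.mem_filter, Fintype.mem_piFinset] at hr
    obtain ⟨hr1, hr2⟩ := hr
    refine ⟨(Tuple.monotone_sort r).strictMono_of_injective (hr2.comp (Equiv.injective _)),
      hr2, fun j => ?_⟩
    simpa using Finset.mem_range.1 (hr1 (Tuple.sort r j))
  -- basic facts about members of T
  have hTfacts : ∀ τ ∈ T, (∀ i, τ i ≤ d) ∧
      (∀ i j : Fin n, i < j → τ j + (n - 1 - (j : ℕ)) < τ i + (n - 1 - (i : ℕ))) := by
    intro τ hτ
    rw [hTdef, Finset.mem_filter, Fintype.mem_piFinset] at hτ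
    obtain ⟨hτ1, hτ2⟩ := hτ
    refine ⟨fun i => by have := Finset.mem_range.1 (hτ1 i); omega, fun i j hij => ?_⟩
    have h1 := hτ2 i j (le_of_lt hij)
    have h2 := j.isLt
    have h3 : (i : ℕ) < (j : ℕ) := hij
    omega
  have hainj : ∀ τ ∈ T, Function.Injective (fun k : Fin n => τ k + (n - 1 - (k : ℕ))) := by
    intro τ hτ i j hij
    have hanti := (hTfacts τ hτ).2
    rcases lt_trichotomy i j with h | h | h
    · exact absurd hij.symm (Nat.ne_of_lt (hanti i j h))
    · exact h
    · exact absurd hij (Nat.ne_of_lt (hanti j i h))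
  -- the two maps
  set jmap : (Fin n → ℕ) → (Fin n → ℕ) × Equiv.Perm (Fin n) :=
    fun r => (fun k : Fin n => r (Tuple.sort r (Fin.rev k)) - (n - 1 - (k : ℕ)),
      ((Tuple.sort r)⁻¹).trans Fin.revPerm) with hjmap
  set imap : (Fin n → ℕ) × Equiv.Perm (Fin n) → (Fin n → ℕ) :=
    fun p => fun j : Fin n => p.1 (p.2 j) + (n - 1 - ((p.2 j : Fin n) : ℕ)) with himap
  -- left inverse
  have hLI : ∀ r ∈ S, imap (jmap r) = r := by
    intro r hr
    obtain ⟨hg, hrinj, hub⟩ := hSfacts r hr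
    have hb := smono_bounds hg hub
    funext j
    simp only [himap, hjmap, Equiv.trans_apply, Fin.revPerm_apply, Fin.rev_rev,
      Equiv.Perm.inv_def]
    rw [Equiv.apply_symm_apply]
    have h1 := (hb ((Tuple.sort r).symm j)).1
    simp only [Function.comp_apply, Equiv.apply_symm_apply] at h1
    rw [hrevval]
    have h3 := ((Tuple.sort r).symm j).isLt
    omega
  -- i maps S into T ×ˢ univ
  have hiS : ∀ r ∈ S, jmap r ∈ T ×ˢ (Finset.univ : Finset (Equiv.Perm (Fin n))) := by
    intro r hr
    obtain ⟨hg, hrinj, hub⟩ := hSfacts r hr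
    have hb := smono_bounds hg hub
    simp only [hjmap, Finset.mem_product, Finset.mem_univ, and_true, hTdef,
      Finset.mem_filter, Fintype.mem_piFinset]
    constructor
    · intro k
      rw [Finset.mem_range]
      have h1 := (hb (Fin.rev k)).2
      simp only [Function.comp_apply] at h1
      rw [hrevval] at h1
      have h2 := k.isLt
      omega
    · intro i j hij
      have hgap := smono_gap hg (Fin.rev j) (Fin.rev i)
        (by rw [hrevval, hrevval]; omega)
      have h1 := (hb (Fin.rev j)).1
      simp only [Function.comp_apply] at hgap h1
      rw [hrevval, hrevval] at hgap
      rw [hrevval] at h1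
      have hi := i.isLt
      have hj := j.isLt
      have hij' : (i : ℕ) ≤ (j : ℕ) := hij
      omega
  -- j maps T ×ˢ univ into S
  have hjT : ∀ p ∈ T ×ˢ (Finset.univ : Finset (Equiv.Perm (Fin n))), imap p ∈ S := by
    rintro ⟨τ, σ⟩ hp
    rw [Finset.mem_product] at hp
    obtain ⟨hτT, -⟩ := hp
    have hτd := (hTfacts τ hτT).1
    rw [hSdef, Finset.mem_filter, Fintype.mem_piFinset]
    constructor
    · intro j
      rw [Finset.mem_range]
      simp only [himap]
      have h1 := hτd (σ j)
      have h2 := (σ j).isLt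
      have h3 := j.pos
      omega
    · intro i j hij
      simp only [himap] at hij
      exact Equiv.injective σ (hainj τ hτT hij)
  -- right inverse
  have hRI : ∀ p ∈ T ×ˢ (Finset.univ : Finset (Equiv.Perm (Fin n))), jmap (imap p) = p := by
    rintro ⟨τ, σ⟩ hp
    rw [Finset.mem_product] at hp
    obtain ⟨hτT, -⟩ := hp
    have hanti := (hTfacts τ hτT).2
    have hrinj : Function.Injective (imap (τ, σ)) := by
      intro i j hij
      simp only [himap] at hij
      exact Equiv.injective σ (hainj τ hτT hij)
    set r : Fin n → ℕ := imap (τ, σ) with hrdef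
    set u : Equiv.Perm (Fin n) := Fin.revPerm.trans σ⁻¹ with hudef
    have hru : ∀ j, r (u j) = τ (Fin.rev j) + (n - 1 - ((Fin.rev j : Fin n) : ℕ)) := by
      intro j
      simp only [hrdef, himap, hudef, Equiv.trans_apply, Fin.revPerm_apply, Equiv.Perm.inv_def,
        Equiv.apply_symm_apply]
    have hmono2 : Monotone (r ∘ ⇑u) := by
      intro i j hij
      simp only [Function.comp_apply, hru]
      rcases eq_or_lt_of_le hij with h | h
      · subst h; exact le_refl _
      · have h2 : Fin.rev j < Fin.rev i := Fin.rev_lt_rev.mpr h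
        rw [hrevval, hrevval]
        exact le_of_lt (by
          have := hanti (Fin.rev j) (Fin.rev i) h2
          rw [hrevval, hrevval] at this
          omega)
    have hsorteq : r ∘ ⇑(Tuple.sort r) = r ∘ ⇑u :=
      Tuple.unique_monotone (Tuple.monotone_sort r) hmono2
    have hsu : ⇑(Tuple.sort r) = ⇑u := funext fun j => hrinj (congrFun hsorteq j)
    simp only [hjmap]
    rw [Prod.mk.injEq]
    constructor
    · funext k
      have h1 : Tuple.sort r (Fin.rev k) = u (Fin.rev k) := congrFun hsu (Fin.rev k)
      rw [h1, hru, Fin.rev_rev]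
      have h2 := k.isLt
      omega
    · ext j
      simp only [Equiv.trans_apply, Fin.revPerm_apply, Equiv.Perm.inv_def]
      have h1 : Tuple.sort r (Fin.rev (σ j)) = j := by
        rw [congrFun hsu (Fin.rev (σ j)), hudef]
        simp only [Equiv.trans_apply, Fin.revPerm_apply, Fin.rev_rev, Equiv.Perm.inv_def,
          Equiv.symm_apply_apply]
      have h2 : (Tuple.sort r).symm j = Fin.rev (σ j) := by
        rw [Equiv.symm_apply_eq, h1]
      rw [h2, Fin.rev_rev]
  -- now assemble
  rw [← Finset.sum_filter_add_sum_filter_not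
    (Fintype.piFinset (fun _ : Fin n => range (n + d))) (fun r => Function.Injective r),
    Finset.sum_eq_zero (fun r hr => hF0 r (Finset.mem_filter.1 hr).2), add_zero]
  rw [← Finset.sum_product']
  exact Finset.sum_nbij' jmap imap hiS hjT hLI hRI
    (fun r hr => (congrArg F (hLI r hr)).symm)


end

section
open Finset Nat MvPolynomial Matrix

noncomputable def cdetR (d n : ℕ) (τ : Fin n → ℕ) : ℝ :=
  (Matrix.of fun j k : Fin n => wCoef d (τ j + (n - 1 - (j : ℕ))) (n - 1 - (k : ℕ))).det

lemma key_poly (d n : ℕ) (hn : 0 < n) (S : (Fin n → ℕ) → MvPolynomial (Fin n) ℝ)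
    (hS : IsSchur n S) :
    (∏ i : Fin n, (1 - (X i : MvPolynomial (Fin n) ℝ)) ^ d)
      = ∑ τ ∈ (Fintype.piFinset fun _ : Fin n => range (d + 1)).filter
            (fun τ => ∀ i j : Fin n, i ≤ j → τ j ≤ τ i),
          MvPolynomial.C (cdetR d n τ) * S τ := by
  -- Vandermonde product is nonzero
  have hV : (∏ i : Fin n, ∏ j : Fin n,
      if (i : ℕ) < (j : ℕ) then (X i - X j : MvPolynomial (Fin n) ℝ) else 1) ≠ 0 := by
    rw [Finset.prod_ne_zero_iff]
    intro i _
    rw [Finset.prod_ne_zero_iff]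
    intro j _
    by_cases h : (i : ℕ) < (j : ℕ)
    · rw [if_pos h]
      refine sub_ne_zero.2 fun hxy => ?_
      have := MvPolynomial.X_injective hxy
      have : (i : ℕ) = (j : ℕ) := congrArg Fin.val this
      omega
    · rw [if_neg h]; exact one_ne_zero
  refine mul_right_cancel₀ hV ?_
  rw [key_expand d n hn]
  rw [group_sum d n (fun r => (MvPolynomial.C (∏ j : Fin n, wCoef d (r j) (n - 1 - (j : ℕ))) :
        MvPolynomial (Fin n) ℝ) *
        (Matrix.of fun j i : Fin n => (X i : MvPolynomial (Fin n) ℝ) ^ (r j)).det)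
    (fun r hr => ?_)]
  swap
  · -- non-injective : determinant vanishes
    rw [Function.not_injective_iff] at hr
    obtain ⟨i, j, hij, hne⟩ := hr
    show MvPolynomial.C (∏ j : Fin n, wCoef d (r j) (n - 1 - (j : ℕ))) *
        (Matrix.of fun j i : Fin n => (X i : MvPolynomial (Fin n) ℝ) ^ (r j)).det = 0
    rw [Matrix.det_zero_of_row_eq hne (funext fun k => by
      simp only [Matrix.of_apply, hij]), mul_zero]
  rw [Finset.sum_mul]
  refine Finset.sum_congr rfl fun τ hτ => ?_
  rw [Finset.mem_filter] at hτ
  obtain ⟨-, hdec⟩ := hτ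
  -- the inner sum over permutations
  have hperm : ∀ σ : Equiv.Perm (Fin n),
      (Matrix.of fun j i : Fin n =>
        (X i : MvPolynomial (Fin n) ℝ) ^ (τ (σ j) + (n - 1 - ((σ j : Fin n) : ℕ)))).det
      = (Equiv.Perm.sign σ : ℤ) •
          (Matrix.of fun j i : Fin n =>
            (X i : MvPolynomial (Fin n) ℝ) ^ (τ j + (n - 1 - (j : ℕ)))).det := by
    intro σ
    have h1 : (Matrix.of fun j i : Fin n =>
        (X i : MvPolynomial (Fin n) ℝ) ^ (τ (σ j) + (n - 1 - ((σ j : Fin n) : ℕ))))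
        = (Matrix.of fun j i : Fin n =>
            (X i : MvPolynomial (Fin n) ℝ) ^ (τ j + (n - 1 - (j : ℕ)))).submatrix σ id := rfl
    rw [h1, Matrix.det_permute]
    simp [Units.smul_def, zsmul_eq_mul]
  calc ∑ σ : Equiv.Perm (Fin n),
        (MvPolynomial.C (∏ j : Fin n,
          wCoef d (τ (σ j) + (n - 1 - ((σ j : Fin n) : ℕ))) (n - 1 - (j : ℕ))) :
            MvPolynomial (Fin n) ℝ) *
          (Matrix.of fun j i : Fin n =>
            (X i : MvPolynomial (Fin n) ℝ) ^ (τ (σ j) + (n - 1 - ((σ j : Fin n) : ℕ)))).det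
      = (∑ σ : Equiv.Perm (Fin n), (Equiv.Perm.sign σ : ℤ) •
          (MvPolynomial.C (∏ j : Fin n,
            wCoef d (τ (σ j) + (n - 1 - ((σ j : Fin n) : ℕ))) (n - 1 - (j : ℕ))) :
              MvPolynomial (Fin n) ℝ)) *
          (Matrix.of fun j i : Fin n =>
            (X i : MvPolynomial (Fin n) ℝ) ^ (τ j + (n - 1 - (j : ℕ)))).det := by
        rw [Finset.sum_mul]
        refine Finset.sum_congr rfl fun σ _ => ?_
        rw [hperm σ]
        rw [zsmul_eq_mul, zsmul_eq_mul]
        ring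
    _ = MvPolynomial.C (cdetR d n τ) *
          (Matrix.of fun j i : Fin n =>
            (X i : MvPolynomial (Fin n) ℝ) ^ (τ j + (n - 1 - (j : ℕ)))).det := by
        congr 1
        rw [cdetR, Matrix.det_apply, map_sum]
        refine Finset.sum_congr rfl fun σ _ => ?_
        rw [Units.smul_def, map_zsmul]
        rfl
    _ = MvPolynomial.C (cdetR d n τ) * (S τ * ∏ i : Fin n, ∏ j : Fin n,
          if (i : ℕ) < (j : ℕ) then (X i - X j : MvPolynomial (Fin n) ℝ) else 1) := by
        congr 1
        rw [← hS τ hdec, ← Matrix.det_transpose]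
        congr 1
    _ = MvPolynomial.C (cdetR d n τ) * S τ * ∏ i : Fin n, ∏ j : Fin n,
          if (i : ℕ) < (j : ℕ) then (X i - X j : MvPolynomial (Fin n) ℝ) else 1 := by ring

end

end BEZ

open BEZ Finset Nat

/-- **Finite binomial expansion of `∏(1−ℓ_i)^{p−m}` in complex zonal polynomials**:
`∏_{i=1}^n (1−ℓ_i)^{p−m} = Σ_{t=0}^{n(p−m)} Σ_{τ∈P^t_n} ((m−p)_τ/t!)·C_τ(ℓ)`. -/
theorem binomial_expansion_complex_zonal
    (p m n : ℕ) (hm : 1 ≤ m) (hmp : m ≤ p) (hn : 1 ≤ n)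
    (S : (Fin n → ℕ) → MvPolynomial (Fin n) ℝ) (hS : IsSchur n S)
    (ℓ : Fin n → ℝ) :
    ∏ i : Fin n, (1 - ℓ i) ^ (p - m)
      = ∑ t ∈ Finset.range (n * (p - m) + 1), ∑ τ ∈ partitionsOf n t,
          (pochP ((m : ℝ) - (p : ℝ)) τ / Nat.factorial t)
            * (chi n τ * MvPolynomial.eval ℓ (S τ)) := by
  classical
  set d := p - m with hddef
  have hd : (m : ℝ) - (p : ℝ) = -(d : ℝ) := by
    rw [hddef, Nat.cast_sub hmp]
    ring
  have hn0 : 0 < n := hn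
  -- evaluate the polynomial identity at ℓ
  have hpoly := key_poly d n hn0 S hS
  have heval := congrArg (MvPolynomial.eval ℓ) hpoly
  rw [map_prod] at heval
  simp only [map_sub, map_pow, map_one, MvPolynomial.eval_X, map_sum, map_mul,
    MvPolynomial.eval_C] at heval
  rw [heval]
  -- reindex the right-hand side
  rw [Finset.sum_sigma']
  rw [← Finset.sum_filter_of_ne (p := fun q : (_ : ℕ) × (Fin n → ℕ) => ∀ i, q.2 i ≤ d)
    (fun q hq hne => ?_)]
  swap
  · -- terms with some τ i > d vanish
    by_contra hcon
    simp only [not_forall, not_le] at hcon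
    obtain ⟨i0, hi0⟩ := hcon
    rw [Finset.mem_sigma] at hq
    have hmem := hq.2
    rw [partitionsOf, Finset.mem_filter] at hmem
    have hdec := hmem.2.1
    have h0 : d < q.2 ⟨0, hn0⟩ := lt_of_lt_of_le hi0 (hdec ⟨0, hn0⟩ i0 (show (⟨0, hn0⟩ : Fin n) ≤ i0 from by rw [Fin.le_def]; simp))
    apply hne
    have hz : pochP ((m : ℝ) - (p : ℝ)) q.2 = 0 := by
      rw [pochP]
      refine Finset.prod_eq_zero (Finset.mem_univ (⟨0, hn0⟩ : Fin n)) ?_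
      rw [asc_eval]
      refine Finset.prod_eq_zero (Finset.mem_range.2 h0) ?_
      rw [hd]
      simp
    rw [hz]
    ring
  · -- the bijection between the filtered sigma-set and T
    refine (Finset.sum_nbij' (fun q => q.2) (fun τ => ⟨∑ i, τ i, τ⟩) ?_ ?_ ?_ ?_ ?_).symm
    · -- membership in T
      rintro ⟨t, τ⟩ hq
      rw [Finset.mem_filter, Finset.mem_sigma] at hq
      obtain ⟨⟨-, hmem⟩, hbd⟩ := hq
      rw [partitionsOf, Finset.mem_filter] at hmem
      rw [Finset.mem_filter, Fintype.mem_piFinset]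
      dsimp only at hbd ⊢
      exact ⟨fun i => Finset.mem_range.2 (by have := hbd i; omega), hmem.2.1⟩
    · -- membership in the filtered sigma set
      intro τ hτ
      rw [Finset.mem_filter, Fintype.mem_piFinset] at hτ
      obtain ⟨hbd, hdec⟩ := hτ
      have hbd' : ∀ i, τ i ≤ d := fun i => by have := Finset.mem_range.1 (hbd i); omega
      rw [Finset.mem_filter, Finset.mem_sigma]
      refine ⟨⟨?_, ?_⟩, fun i => hbd' i⟩
      · show ∑ i, τ i ∈ Finset.range (n * d + 1)
        rw [Finset.mem_range]
        have h1 : ∑ i, τ i ≤ ∑ _i : Fin n, d := Finset.sum_le_sum fun i _ => hbd' i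
        rw [Finset.sum_const, Finset.card_univ, Fintype.card_fin, smul_eq_mul] at h1
        omega
      · show τ ∈ partitionsOf n (∑ i, τ i)
        rw [partitionsOf, Finset.mem_filter, Fintype.mem_piFinset]
        exact ⟨fun i => Finset.mem_range.2 (Nat.lt_succ_of_le
          (Finset.single_le_sum (fun i _ => Nat.zero_le (τ i)) (Finset.mem_univ i))),
          hdec, rfl⟩
    · -- left inverse
      rintro ⟨t, τ⟩ hq
      rw [Finset.mem_filter, Finset.mem_sigma] at hq
      obtain ⟨⟨-, hmem⟩, -⟩ := hq
      rw [partitionsOf, Finset.mem_filter] at hmem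
      exact Sigma.ext hmem.2.2 (HEq.rfl)
    · intro τ _
      rfl
    · -- values agree
      rintro ⟨t, τ⟩ hq
      rw [Finset.mem_filter, Finset.mem_sigma] at hq
      obtain ⟨⟨-, hmem⟩, hbd⟩ := hq
      rw [partitionsOf, Finset.mem_filter] at hmem
      dsimp only at hbd hmem ⊢
      have ht : ∑ i, τ i = t := hmem.2.2
      have hdw : cdetR d n τ = pochP (-(d : ℝ)) τ *
          (∏ i : Fin n, ∏ j : Fin n,
            if (i : ℕ) < (j : ℕ) then ((τ i : ℝ) - (τ j : ℝ) + (j : ℕ) - (i : ℕ)) else 1) /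
          ∏ i : Fin n, ((τ i + (n - 1 - (i : ℕ))).factorial : ℝ) := det_w d n τ hbd
      rw [hd, chi, ← ht, hdw]
      have h1 : ((∑ i, τ i)! : ℝ) ≠ 0 := by positivity
      have h2 : (∏ i : Fin n, ((τ i + (n - 1 - (i : ℕ))).factorial : ℝ)) ≠ 0 := by positivity
      field_simp
end
end

section
/- Relation between the eigenvalues of the Beta and F matrices: let A₁ and A₂ be m×m complex Hermitian matrices with A₁ positive semidefinite and A₂ positive definite, so that A₁+A₂ is positive definite. Let B = (A₁+A₂)^{−1/2} A₁ (A₁+A₂)^{−1/2} and F = A₂^{−1/2} A₁ A₂^{−1/2}, where M^{1/2} denotes the unique positive-definite square root of a positive-definite Hermitian matrix M. Then every eigenvalue ℓ of B satisfies 0 ≤ ℓ < 1, and the eigenvalues of F, counted with multiplicity, are exactly the numbers ℓ/(1−ℓ) as ℓ ranges over the eigenvalues of B counted with multiplicity. -/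
open scoped BigOperators Real
open MeasureTheory

noncomputable section

open Polynomial in
lemma aux_charpoly_conj {n : Type*} [Fintype n] [DecidableEq n]
    (P A : Matrix n n ℂ) (hP : IsUnit P.det) :
    (P * A * P⁻¹).charpoly = A.charpoly := by
  have h1 : P * P⁻¹ = 1 := Matrix.mul_nonsing_inv P hP
  have key : (P * A * P⁻¹).charmatrix = P.map C * A.charmatrix * (P⁻¹).map C := by
    rw [Matrix.charmatrix, Matrix.charmatrix]
    simp only [RingHom.mapMatrix_apply]
    rw [Matrix.mul_sub, Matrix.sub_mul]
    congr 1
    · rw [← (Matrix.scalar_commute (X : ℂ[X]) (Commute.all X) (P.map C)).eq, Matrix.mul_assoc,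
        ← Matrix.map_mul, h1, Matrix.map_one C (map_zero C) (map_one C), Matrix.mul_one]
    · rw [← Matrix.map_mul, ← Matrix.map_mul]
  rw [Matrix.charpoly, Matrix.charpoly, key, Matrix.det_mul, Matrix.det_mul]
  have : (P.map C).det * (P⁻¹.map C).det = 1 := by
    rw [← Matrix.det_mul, ← Matrix.map_mul, h1, Matrix.map_one C (map_zero C) (map_one C),
      Matrix.det_one]
  calc (P.map C).det * A.charmatrix.det * (P⁻¹.map C).det
      = (P.map C).det * (P⁻¹.map C).det * A.charmatrix.det := by ring
    _ = A.charmatrix.det := by rw [this, one_mul]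

open Polynomial in
lemma aux_charpoly_diagonal_roots {n : Type*} [Fintype n] [DecidableEq n] (d : n → ℂ) :
    (Matrix.diagonal d).charpoly.roots = Finset.univ.val.map d := by
  have h : (Matrix.diagonal d).charpoly = ∏ i, (X - C (d i)) := by
    rw [Matrix.charpoly]
    have hc : (Matrix.diagonal d).charmatrix = Matrix.diagonal (fun i => X - C (d i)) := by
      ext i j
      by_cases h : i = j
      · subst h; simp
      · simp [Matrix.charmatrix_apply_ne _ _ _ h, Matrix.diagonal_apply_ne _ h]
    rw [hc, Matrix.det_diagonal]
  rw [h]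
  have h2 := Polynomial.roots_multiset_prod_X_sub_C (Finset.univ.val.map d)
  rw [Multiset.map_map] at h2
  rw [← h2]
  congr 1

lemma aux_exists_perm_of_map_eq {n : ℕ} {f g : Fin n → ℝ}
    (h : Finset.univ.val.map f = Finset.univ.val.map g) :
    ∃ σ : Equiv.Perm (Fin n), ∀ i, f i = g (σ i) := by
  have h1 : (↑(List.ofFn (f ∘ Tuple.sort f)) : Multiset ℝ) = ↑(List.ofFn f) :=
    Quot.sound (Equiv.Perm.ofFn_comp_perm _ f)
  have h2 : (↑(List.ofFn (g ∘ Tuple.sort g)) : Multiset ℝ) = ↑(List.ofFn g) :=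
    Quot.sound (Equiv.Perm.ofFn_comp_perm _ g)
  have hm : (↑(List.ofFn (f ∘ Tuple.sort f)) : Multiset ℝ) = ↑(List.ofFn (g ∘ Tuple.sort g)) := by
    rw [h1, h2, ← Fin.univ_val_map, ← Fin.univ_val_map, h]
  have hperm : List.Perm (List.ofFn (f ∘ Tuple.sort f)) (List.ofFn (g ∘ Tuple.sort g)) :=
    Quotient.exact hm
  have heq : List.ofFn (f ∘ Tuple.sort f) = List.ofFn (g ∘ Tuple.sort g) :=
    List.Perm.eq_of_sortedLE ((Tuple.monotone_sort f).sortedLE_ofFn)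
      ((Tuple.monotone_sort g).sortedLE_ofFn) hperm
  have hfun : f ∘ Tuple.sort f = g ∘ Tuple.sort g := List.ofFn_injective heq
  refine ⟨(Tuple.sort f).symm.trans (Tuple.sort g), fun i => ?_⟩
  have := congrFun hfun ((Tuple.sort f).symm i)
  simpa using this


open scoped ComplexOrder in
/-- **Relation between the eigenvalues of the Beta and F matrices**: with
`B = (A₁+A₂)^{−1/2} A₁ (A₁+A₂)^{−1/2}` and `F = A₂^{−1/2} A₁ A₂^{−1/2}` (where `R`,
`T` are the unique positive-definite square roots of `A₁+A₂` resp. `A₂`), every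
eigenvalue `ℓ` of `B` satisfies `0 ≤ ℓ < 1`, and the eigenvalues of `F`, counted with
multiplicity, are exactly the numbers `ℓ/(1−ℓ)` for `ℓ` eigenvalue of `B`. -/
theorem beta_F_eigenvalue_relation
    (m : ℕ) (A₁ A₂ R T B F : Matrix (Fin m) (Fin m) ℂ)
    (hA₁ : A₁.PosSemidef) (hA₂ : A₂.PosDef)
    (hR : R.PosDef) (hRsq : R * R = A₁ + A₂)
    (hT : T.PosDef) (hTsq : T * T = A₂)
    (hB : B = R⁻¹ * A₁ * R⁻¹) (hF : F = T⁻¹ * A₁ * T⁻¹)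
    (hBh : B.IsHermitian) (hFh : F.IsHermitian) :
    (∀ i, 0 ≤ hBh.eigenvalues i ∧ hBh.eigenvalues i < 1)
      ∧ ∃ σ : Equiv.Perm (Fin m), ∀ i,
          hFh.eigenvalues i = hBh.eigenvalues (σ i) / (1 - hBh.eigenvalues (σ i)) := by
  classical
  have hRd : IsUnit R.det := (Matrix.isUnit_iff_isUnit_det R).mp hR.isUnit
  have hTd : IsUnit T.det := (Matrix.isUnit_iff_isUnit_det T).mp hT.isUnit
  have hRRinv : R⁻¹ * R = 1 := Matrix.nonsing_inv_mul R hRd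
  have hRRinv' : R * R⁻¹ = 1 := Matrix.mul_nonsing_inv R hRd
  have hTTinv : T⁻¹ * T = 1 := Matrix.nonsing_inv_mul T hTd
  have hTTinv' : T * T⁻¹ = 1 := Matrix.mul_nonsing_inv T hTd
  -- B is positive semidefinite
  have hBpsd : B.PosSemidef := by
    have h := hA₁.conjTranspose_mul_mul_same R⁻¹
    rwa [hR.1.inv, ← hB] at h
  -- 1 - B is positive definite
  have hone : R⁻¹ * (A₁ + A₂) * R⁻¹ = 1 := by
    rw [← hRsq, ← Matrix.mul_assoc R⁻¹ R R, hRRinv, one_mul, hRRinv']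
  have honeB : 1 - B = R⁻¹ * A₂ * R⁻¹ := by
    rw [hB, ← hone, Matrix.mul_add, Matrix.add_mul, add_sub_cancel_left]
  have hcong : ((R⁻¹).conjTranspose * A₂ * R⁻¹).PosDef := by
    refine Matrix.PosDef.of_dotProduct_mulVec_pos ?_ ?_
    · exact Matrix.isHermitian_conjTranspose_mul_mul R⁻¹ hA₂.1
    · intro x hx
      have hx' : Matrix.mulVec R⁻¹ x ≠ 0 := by
        intro h
        apply hx
        have h2 := congrArg (fun y => Matrix.mulVec R y) h
        simpa [Matrix.mulVec_mulVec, hRRinv'] using h2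
      simpa only [Matrix.star_mulVec, Matrix.dotProduct_mulVec, Matrix.vecMul_vecMul]
        using hA₂.dotProduct_mulVec_pos hx'
  have h1B : (1 - B).PosDef := by
    have := hcong
    rwa [hR.1.inv, ← honeB] at this
  -- eigenvalue bounds
  have hlt : ∀ i, hBh.eigenvalues i < 1 := by
    intro i
    set v : Fin m → ℂ := ⇑(hBh.eigenvectorBasis i) with hv
    have hnorm : ‖hBh.eigenvectorBasis i‖ = 1 := hBh.eigenvectorBasis.orthonormal.1 i
    have hv0 : v ≠ 0 := by
      intro h
      have hb0 : hBh.eigenvectorBasis i = 0 := by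
        ext j; exact congrFun h j
      rw [hb0] at hnorm
      simp at hnorm
    have hmv : Matrix.mulVec B v = hBh.eigenvalues i • v := hBh.mulVec_eigenvectorBasis i
    have hpos := h1B.re_dotProduct_pos hv0
    rw [Matrix.sub_mulVec, Matrix.one_mulVec, hmv, dotProduct_sub,
      dotProduct_smul] at hpos
    have hpos1 := (Matrix.PosDef.one (n := Fin m) (R := ℂ)).re_dotProduct_pos hv0
    rw [Matrix.one_mulVec] at hpos1
    simp only [RCLike.re_to_complex, Complex.sub_re, Complex.smul_re, smul_eq_mul] at hpos hpos1
    nlinarith [hpos, hpos1]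
  refine ⟨fun i => ⟨hBpsd.eigenvalues_nonneg i, hlt i⟩, ?_⟩
  -- spectral setup for B
  set ℓ : Fin m → ℝ := hBh.eigenvalues with hℓ
  set q : Fin m → ℝ := fun i => ℓ i / (1 - ℓ i) with hq
  set U : Matrix (Fin m) (Fin m) ℂ := (hBh.eigenvectorUnitary : Matrix (Fin m) (Fin m) ℂ) with hU
  have hUU : star U * U = 1 := Matrix.mem_unitaryGroup_iff'.mp hBh.eigenvectorUnitary.2
  have hUU' : U * star U = 1 := Matrix.mem_unitaryGroup_iff.mp hBh.eigenvectorUnitary.2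
  have hUd : IsUnit U.det := Matrix.isUnit_det_of_left_inverse hUU
  have hUinv : U⁻¹ = star U := Matrix.inv_eq_left_inv hUU
  set Dl : Matrix (Fin m) (Fin m) ℂ := Matrix.diagonal (RCLike.ofReal ∘ ℓ) with hDl
  set Dq : Matrix (Fin m) (Fin m) ℂ := Matrix.diagonal (RCLike.ofReal ∘ q) with hDq
  have hspec : B = U * Dl * star U := hBh.spectral_theorem
  have hdiag : Dq * (1 - Dl) = Dl := by
    rw [hDq, hDl, ← Matrix.diagonal_one, Matrix.diagonal_sub, Matrix.diagonal_mul_diagonal]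
    refine congrArg Matrix.diagonal (funext fun i => ?_)
    have hne : (1 : ℝ) - ℓ i ≠ 0 := sub_ne_zero.mpr (hlt i).ne'
    have hmain : q i * (1 - ℓ i) = ℓ i := div_mul_cancel₀ _ hne
    show (RCLike.ofReal (q i) : ℂ) * (1 - RCLike.ofReal (ℓ i)) = RCLike.ofReal (ℓ i)
    calc (RCLike.ofReal (q i) : ℂ) * (1 - RCLike.ofReal (ℓ i))
        = RCLike.ofReal (q i * (1 - ℓ i)) := by push_cast; ring
      _ = RCLike.ofReal (ℓ i) := by rw [hmain]
  -- algebraic identities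
  have hA1eq : A₁ = R * B * R := by
    rw [hB]
    simp only [← Matrix.mul_assoc]
    rw [hRRinv', one_mul, Matrix.mul_assoc, hRRinv, Matrix.mul_one]
  have honeBU : 1 - B = U * (1 - Dl) * star U := by
    rw [Matrix.mul_sub, Matrix.sub_mul, Matrix.mul_one, hUU', ← hspec]
  have hTTeq : T * T = R * (U * (1 - Dl) * star U) * R := by
    rw [← honeBU, hTsq, honeB]
    simp only [← Matrix.mul_assoc]
    rw [hRRinv', one_mul, Matrix.mul_assoc, hRRinv, Matrix.mul_one]
  have hTinvd : IsUnit (T⁻¹).det := Matrix.isUnit_nonsing_inv_det T hTd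
  have hPd : IsUnit (T⁻¹ * R * U).det := by
    rw [Matrix.det_mul, Matrix.det_mul]
    exact (hTinvd.mul hRd).mul hUd
  have hPinv : (T⁻¹ * R * U)⁻¹ = star U * (R⁻¹ * T) := by
    rw [Matrix.mul_inv_rev, Matrix.mul_inv_rev, hUinv, Matrix.nonsing_inv_nonsing_inv T hTd]
  have hXT : R * U * Dq * star U * R⁻¹ * (T * T) = A₁ := by
    rw [hTTeq, hA1eq, hspec]
    simp only [← Matrix.mul_assoc]
    rw [Matrix.mul_assoc _ R⁻¹ R, hRRinv, Matrix.mul_one,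
      Matrix.mul_assoc _ (star U) U, hUU, Matrix.mul_one,
      Matrix.mul_assoc _ Dq (1 - Dl), hdiag]
  have hFP : F = T⁻¹ * R * U * Dq * (T⁻¹ * R * U)⁻¹ := by
    rw [hPinv, hF, ← hXT]
    simp only [← Matrix.mul_assoc]
    rw [Matrix.mul_assoc _ T T⁻¹, hTTinv', Matrix.mul_one]
  -- characteristic polynomials
  have hc1 : F.charpoly = Dq.charpoly := by
    rw [hFP]; exact aux_charpoly_conj _ _ hPd
  set V : Matrix (Fin m) (Fin m) ℂ := (hFh.eigenvectorUnitary : Matrix (Fin m) (Fin m) ℂ) with hV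
  have hVV : star V * V = 1 := Matrix.mem_unitaryGroup_iff'.mp hFh.eigenvectorUnitary.2
  have hVd : IsUnit V.det := Matrix.isUnit_det_of_left_inverse hVV
  have hVinv : V⁻¹ = star V := Matrix.inv_eq_left_inv hVV
  set Df : Matrix (Fin m) (Fin m) ℂ := Matrix.diagonal (RCLike.ofReal ∘ hFh.eigenvalues) with hDf
  have hc2 : F.charpoly = Df.charpoly := by
    have hspecF : F = V * Df * star V := hFh.spectral_theorem
    calc F.charpoly = (V * Df * V⁻¹).charpoly := by rw [hVinv, ← hspecF]
      _ = Df.charpoly := aux_charpoly_conj _ _ hVd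
  have hroots : Finset.univ.val.map ((RCLike.ofReal ∘ hFh.eigenvalues) : Fin m → ℂ)
      = Finset.univ.val.map ((RCLike.ofReal ∘ q) : Fin m → ℂ) := by
    have h := congrArg Polynomial.roots (hc2.symm.trans hc1)
    rwa [hDf, hDq, aux_charpoly_diagonal_roots, aux_charpoly_diagonal_roots] at h
  have hmap : Finset.univ.val.map hFh.eigenvalues = Finset.univ.val.map q := by
    apply Multiset.map_injective (RCLike.ofReal_injective (K := ℂ))
    rw [Multiset.map_map, Multiset.map_map]; exact hroots
  obtain ⟨σ, hσ⟩ := aux_exists_perm_of_map_eq hmap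
  exact ⟨σ, fun i => hσ i⟩


end
end
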